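/- Let n be a nonempty finite type and let φ : Matrix n n ℂ → ℂ be a ℂ-linear functional such that for every Hermitian matrix G, φ(G) is real, and φ(G).re ≥ c for every c ∈ ℝ such that G − c•(1 : Matrix n n ℂ) is positive semidefinite. Then there exists a matrix M ∈ Matrix n n ℂ which is positive semidefinite with trace Tr(M) = 1, such that φ(G) = Tr(G * M) for every G ∈ Matrix n n ℂ. -/

import Mathlib

open scoped ComplexOrder
open Matrix

/-- **Quasi-expectation operators are represented by density matrices**
(forward direction of part 1 of Theorem 1): a linear functional on matrices
that is real on Hermitian matrices and dominates the spectral lower bound is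
of the form `G ↦ Tr(G M)` for a positive semidefinite trace-one matrix `M`. -/
theorem quasiExpectation_exists_densityMatrix
    (n : Type*) [Fintype n] [DecidableEq n] [Nonempty n]
    (φ : Matrix n n ℂ →ₗ[ℂ] ℂ)
    (hreal : ∀ G : Matrix n n ℂ, G.IsHermitian → (φ G).im = 0)
    (hpos : ∀ G : Matrix n n ℂ, G.IsHermitian → ∀ c : ℝ,
      (G - (c : ℂ) • (1 : Matrix n n ℂ)).PosSemidef → c ≤ (φ G).re) :
    ∃ M : Matrix n n ℂ, M.PosSemidef ∧ M.trace = 1 ∧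
      ∀ G : Matrix n n ℂ, φ G = (G * M).trace := by
  set M : Matrix n n ℂ := Matrix.of (fun j i => φ (Matrix.single i j 1)) with hM
  have hφs : ∀ (i j : n) (c : ℂ), φ (Matrix.single i j c) = c * M j i := by
    intro i j c
    have h : Matrix.single i j c = c • Matrix.single i j 1 := by
      rw [Matrix.smul_single, smul_eq_mul, mul_one]
    rw [h, _root_.map_smul, smul_eq_mul]
    rfl
  -- representation
  have hrep : ∀ G : Matrix n n ℂ, φ G = (G * M).trace := by
    intro G
    conv_lhs => rw [matrix_eq_sum_single G]
    simp only [map_sum, hφs]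
    simp [Matrix.trace, Matrix.diag, Matrix.mul_apply]
  -- nonnegativity on PSD matrices
  have hnn : ∀ G : Matrix n n ℂ, G.PosSemidef → 0 ≤ φ G := by
    intro G hG
    have h0 : (G - ((0:ℝ) : ℂ) • (1 : Matrix n n ℂ)).PosSemidef := by simpa using hG
    have := hpos G hG.1 0 h0
    rw [Complex.le_def]
    exact ⟨by simpa using this, by simp [hreal G hG.1]⟩
  -- rank one PSD
  have hrank1 : ∀ x : n → ℂ, (Matrix.vecMulVec x (star x)).PosSemidef := by
    intro x
    rw [Matrix.posSemidef_iff_dotProduct_mulVec]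
    constructor
    · ext i j
      simp [Matrix.vecMulVec_apply, Matrix.conjTranspose_apply, mul_comm]
    · intro y
      have h : star y ⬝ᵥ (Matrix.vecMulVec x (star x)) *ᵥ y
          = (star y ⬝ᵥ x) * star (star y ⬝ᵥ x) := by
        simp [dotProduct, Matrix.mulVec, Matrix.vecMulVec_apply, Finset.mul_sum,
          Finset.sum_mul, mul_comm, mul_assoc, mul_left_comm]
        rw [Finset.sum_comm]
      rw [h]
      exact mul_star_self_nonneg _
  refine ⟨M, ?_, ?_, hrep⟩
  · -- PSD
    have hquad : ∀ x : n → ℂ, star x ⬝ᵥ M *ᵥ x = φ (Matrix.vecMulVec x (star x)) := by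
      intro x
      rw [hrep]
      simp [dotProduct, Matrix.mulVec, Matrix.trace, Matrix.diag, Matrix.mul_apply,
        Matrix.vecMulVec_apply, Finset.mul_sum]
      rw [Finset.sum_comm]
      congr 1; ext j; congr 1; ext i; ring
    rw [Matrix.posSemidef_iff_dotProduct_mulVec]
    constructor
    · -- Hermitian
      ext i j
      have hct : ∀ (i j : n), (Matrix.single i j (1:ℂ))ᴴ = Matrix.single j i 1 := by
        intro i j
        ext a b
        simp only [Matrix.conjTranspose_apply, Matrix.single, Matrix.of_apply]
        by_cases h : j = a ∧ i = b
        · rw [if_pos h, if_pos ⟨h.2, h.1⟩, star_one]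
        · rw [if_neg h, if_neg (by tauto), star_zero]
      have hA : (Matrix.single i j 1 + Matrix.single j i 1 : Matrix n n ℂ).IsHermitian := by
        rw [Matrix.IsHermitian, Matrix.conjTranspose_add, hct, hct, add_comm]
      have hB : ((Complex.I • (Matrix.single i j 1 - Matrix.single j i 1) : Matrix n n ℂ)).IsHermitian := by
        rw [Matrix.IsHermitian, Matrix.conjTranspose_smul, Matrix.conjTranspose_sub, hct, hct,
          Complex.star_def, Complex.conj_I]
        module
      have h1 := hreal _ hA
      have h2 := hreal _ hB
      rw [map_add] at h1
      rw [_root_.map_smul, map_sub] at h2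
      rw [Matrix.conjTranspose_apply, hM, Matrix.of_apply, Matrix.of_apply]
      set a := φ (Matrix.single i j 1) with ha
      set b := φ (Matrix.single j i 1) with hb
      simp only [Complex.add_im] at h1
      simp only [smul_eq_mul, Complex.mul_im, Complex.I_re, Complex.I_im, Complex.sub_re,
        Complex.sub_im, zero_mul, one_mul, mul_zero] at h2
      rw [Complex.star_def, Complex.ext_iff, Complex.conj_re, Complex.conj_im]
      constructor <;> linarith
    · intro x
      rw [hquad x]
      exact hnn _ (hrank1 x)
  · -- trace = 1
    have h1 : φ (1 : Matrix n n ℂ) = M.trace := by rw [hrep]; simp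
    have hherm1 : (1 : Matrix n n ℂ).IsHermitian := Matrix.isHermitian_one
    have hge : (1:ℝ) ≤ (φ 1).re := by
      apply hpos _ hherm1 1
      simp [Matrix.PosSemidef.zero]
    have hle : (φ (1 : Matrix n n ℂ)).re ≤ 1 := by
      have := hpos (-(1 : Matrix n n ℂ)) (by simp [Matrix.IsHermitian]) (-1)
        (by simp [Matrix.PosSemidef.zero])
      rw [map_neg] at this
      simp at this
      linarith
    rw [← h1]
    apply Complex.ext
    · simp only [Complex.one_re]; linarith
    · simp [hreal _ hherm1]
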